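/- Let N = N(s_0 | a_1/b_1, …, a_m/b_m) be an n×n star-shaped intersection matrix built from an integer s_0 ≥ 1 and m ≥ 3 Hirzebruch–Jung chain matrices N_1, …, N_m with associated data (a_j, b_j, R_j). Then s_0 > Σ_{j=1}^m b_j/a_j, and det(N) = (−1)^n · (Π_{j=1}^m a_j) · (s_0 − Σ_{j=1}^m b_j/a_j). In particular |det(N)| admits the factorization into two positive integers |det(N)| = ((Π_j a_j)/lcm(a_1,…,a_m)) · (lcm(a_1,…,a_m)·(s_0 − Σ_j b_j/a_j)). -/

import Mathlib

open Matrix BigOperators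

lemma chain_det_aux {ℓ : ℕ} (M : Matrix (Fin (ℓ+1)) (Fin (ℓ+1)) ℤ)
    (hMadj : ∀ i i' : Fin (ℓ+1), ((i:ℕ)+1 = (i':ℕ) ∨ (i':ℕ)+1 = (i:ℕ)) → M i i' = 1)
    (hMoff : ∀ i i' : Fin (ℓ+1), i ≠ i' → (i:ℕ)+1 ≠ (i':ℕ) → (i':ℕ)+1 ≠ (i:ℕ) → M i i' = 0)
    (a : ℤ) (R : Fin (ℓ+1) → ℤ) (hRlast : R (Fin.last ℓ) = 1)
    (hRrel : M.mulVec R = fun i => if i = 0 then -a else 0) :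
    M.det = (-1)^(ℓ+1) * a := by
  have hadj : M.adjugate (Fin.last ℓ) 0 = (-1)^ℓ := by
    rw [Matrix.adjugate_apply, Matrix.det_succ_row_zero]
    rw [Finset.sum_eq_single (Fin.last ℓ)]
    · have h0 : (M.updateRow 0 (Pi.single (Fin.last ℓ) 1)) 0 (Fin.last ℓ) = 1 := by
        rw [Matrix.updateRow_self, Pi.single_apply, if_pos rfl]
      rw [h0, mul_one]
      have hsub : ((M.updateRow 0 (Pi.single (Fin.last ℓ) 1)).submatrix Fin.succ
          (Fin.last ℓ).succAbove).det = 1 := by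
        have htri : ((M.updateRow 0 (Pi.single (Fin.last ℓ) 1)).submatrix Fin.succ
            (Fin.last ℓ).succAbove).BlockTriangular id := by
          intro p q h
          simp only [Matrix.submatrix_apply, Fin.succAbove_last]
          rw [Matrix.updateRow_ne (Fin.succ_ne_zero p)]
          have hq : (q : ℕ) < (p : ℕ) := h
          apply hMoff
          · apply Fin.ne_of_val_ne
            simp only [Fin.val_succ, Fin.coe_castSucc]; omega
          · simp only [Fin.val_succ, Fin.coe_castSucc]; omega
          · simp only [Fin.val_succ, Fin.coe_castSucc]; omega
        rw [Matrix.det_of_upperTriangular htri]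
        apply Finset.prod_eq_one
        intro p _
        simp only [Matrix.submatrix_apply, Fin.succAbove_last]
        rw [Matrix.updateRow_ne (Fin.succ_ne_zero p)]
        apply hMadj
        right
        simp
      rw [hsub, mul_one, Fin.val_last]
    · intro j _ hj
      rw [Matrix.updateRow_self, Pi.single_apply, if_neg hj, mul_zero, zero_mul]
    · intro h; exact absurd (Finset.mem_univ _) h
  have h1 : (M.adjugate * M).mulVec R = M.det • R := by
    rw [Matrix.adjugate_mul, Matrix.smul_mulVec, Matrix.one_mulVec]
  have h2 : (M.adjugate * M).mulVec R
      = M.adjugate.mulVec (fun i => if i = 0 then -a else 0) := by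
    rw [← Matrix.mulVec_mulVec, hRrel]
  have h3 := congrFun (h1.symm.trans h2) (Fin.last ℓ)
  simp only [Pi.smul_apply, smul_eq_mul, hRlast, mul_one, Matrix.mulVec,
    dotProduct, mul_ite, mul_zero, mul_neg] at h3
  rw [Finset.sum_ite_eq' Finset.univ (0 : Fin (ℓ+1))] at h3
  rw [if_pos (Finset.mem_univ _), hadj] at h3
  rw [h3]; ring



/-- **Star-shaped intersection matrices: determinant formula.**
Let `N = N(s₀ | a₁/b₁, …, a_m/b_m)` be an `n×n` star-shaped intersection matrix built from an
integer `s₀ ≥ 1` and `m ≥ 3` Hirzebruch–Jung chain matrices `N₁, …, N_m` with associated data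
`(a_j, b_j, R_j)` (here `b j = R j 0`).  Then `s₀ > Σ b_j/a_j`,
`det N = (−1)^n (Π a_j)(s₀ − Σ b_j/a_j)`, and `|det N|` factors as the product of the two
positive integers `(Π a_j)/lcm(a_j)` and `lcm(a_j)·(s₀ − Σ b_j/a_j)`. -/
theorem star_shaped_det
    (m : ℕ) (hm : 3 ≤ m)
    (ℓ : Fin m → ℕ)
    (M : ∀ j : Fin m, Matrix (Fin (ℓ j + 1)) (Fin (ℓ j + 1)) ℤ)
    (hMdiag : ∀ j i, M j i i ≤ -2)
    (hMadj : ∀ (j : Fin m) (i i' : Fin (ℓ j + 1)),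
      ((i : ℕ) + 1 = (i' : ℕ) ∨ (i' : ℕ) + 1 = (i : ℕ)) → M j i i' = 1)
    (hMoff : ∀ (j : Fin m) (i i' : Fin (ℓ j + 1)),
      i ≠ i' → (i : ℕ) + 1 ≠ (i' : ℕ) → (i' : ℕ) + 1 ≠ (i : ℕ) → M j i i' = 0)
    (a : Fin m → ℤ) (ha : ∀ j, 1 ≤ a j)
    (R : ∀ j : Fin m, Fin (ℓ j + 1) → ℤ)
    (hRpos : ∀ j i, 0 < R j i)
    (hRlast : ∀ j, R j (Fin.last (ℓ j)) = 1)
    (hRrel : ∀ j, (M j).mulVec (R j) = fun i => if i = 0 then -(a j) else 0)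
    (s₀ : ℤ) (hs₀ : 1 ≤ s₀)
    (N : Matrix (Option ((j : Fin m) × Fin (ℓ j + 1)))
                (Option ((j : Fin m) × Fin (ℓ j + 1))) ℤ)
    (hN₀ : N none none = -s₀)
    (hN₁ : ∀ (j : Fin m) (i : Fin (ℓ j + 1)),
      N none (some ⟨j, i⟩) = if i = 0 then 1 else 0)
    (hN₂ : ∀ (j : Fin m) (i : Fin (ℓ j + 1)),
      N (some ⟨j, i⟩) none = if i = 0 then 1 else 0)
    (hN₃ : ∀ (j : Fin m) (i i' : Fin (ℓ j + 1)),
      N (some ⟨j, i⟩) (some ⟨j, i'⟩) = M j i i')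
    (hN₄ : ∀ (j j' : Fin m) (i : Fin (ℓ j + 1)) (i' : Fin (ℓ j' + 1)),
      j ≠ j' → N (some ⟨j, i⟩) (some ⟨j', i'⟩) = 0)
    (hNdef : ∀ v : Option ((j : Fin m) × Fin (ℓ j + 1)) → ℚ, v ≠ 0 →
      v ⬝ᵥ (N.map (Int.cast : ℤ → ℚ)).mulVec v < 0) :
    (∑ j, (R j 0 : ℚ) / (a j : ℚ)) < (s₀ : ℚ) ∧
    (N.map (Int.cast : ℤ → ℚ)).det =
      (-1) ^ (Fintype.card (Option ((j : Fin m) × Fin (ℓ j + 1)))) *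
        (∏ j, (a j : ℚ)) * ((s₀ : ℚ) - ∑ j, (R j 0 : ℚ) / (a j : ℚ)) ∧
    ∃ D₁ D₂ : ℤ, 0 < D₁ ∧ 0 < D₂ ∧
      (D₁ : ℚ) = (∏ j, (a j : ℚ)) / ((Finset.univ.lcm a : ℤ) : ℚ) ∧
      (D₂ : ℚ) = ((Finset.univ.lcm a : ℤ) : ℚ) *
        ((s₀ : ℚ) - ∑ j, (R j 0 : ℚ) / (a j : ℚ)) ∧
      |N.det| = D₁ * D₂ := by
  classical
  set S : ℚ := ∑ j, (R j 0 : ℚ) / (a j : ℚ) with hS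
  have ha0 : ∀ j, (a j : ℚ) ≠ 0 := fun j =>
    Int.cast_ne_zero.mpr (by have := ha j; omega)
  -- key sum identity
  have key : ∀ (j : Fin m) (i : Fin (ℓ j + 1)),
      ∑ i', (M j i i' : ℚ) * ((R j i' : ℚ) / (a j : ℚ))
        = -(if i = 0 then (1:ℚ) else 0) := by
    intro j i
    have h := congrFun (hRrel j) i
    simp only [Matrix.mulVec, dotProduct] at h
    have h' : ∑ i', ((M j i i' : ℚ) * (R j i' : ℚ))
        = if i = 0 then -(a j : ℚ) else 0 := by
      have := congrArg (fun z : ℤ => (z : ℚ)) h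
      push_cast at this
      simpa [apply_ite (fun z : ℤ => (z : ℚ))] using this
    calc ∑ i', (M j i i' : ℚ) * ((R j i' : ℚ) / (a j : ℚ))
        = (∑ i', (M j i i' : ℚ) * (R j i' : ℚ)) / (a j : ℚ) := by
          rw [Finset.sum_div]; simp_rw [mul_div_assoc]
      _ = -(if i = 0 then (1:ℚ) else 0) := by
          rw [h']; split_ifs
          · rw [neg_div, div_self (ha0 j)]
          · simp
  -- Part 1
  have sumsig : ∀ (f : ((j : Fin m) × Fin (ℓ j + 1)) → ℚ),
      ∑ x : (j : Fin m) × Fin (ℓ j + 1), f x = ∑ j, ∑ i, f ⟨j, i⟩ := by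
    intro f
    rw [← Finset.univ_sigma_univ, Finset.sum_sigma]
  have hNrow : ∀ (w : ((j : Fin m) × Fin (ℓ j + 1)) → ℚ)
      (hw : ∀ x, w x = (R x.1 x.2 : ℚ) / (a x.1 : ℚ)) (j : Fin m) (i : Fin (ℓ j + 1)),
      ∑ x : (j : Fin m) × Fin (ℓ j + 1), ((N (some ⟨j, i⟩) (some x) : ℚ)) * w x
        = -(if i = 0 then (1:ℚ) else 0) := by
    intro w hw j i
    rw [sumsig]
    rw [Finset.sum_eq_single j]
    · have : ∀ i', ((N (some ⟨j, i⟩) (some ⟨j, i'⟩) : ℚ)) * w ⟨j, i'⟩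
          = (M j i i' : ℚ) * ((R j i' : ℚ) / (a j : ℚ)) := by
        intro i'; rw [hN₃, hw]
      rw [Finset.sum_congr rfl fun i' _ => this i', key j i]
    · intro j' _ hj'
      apply Finset.sum_eq_zero
      intro i' _
      rw [hN₄ j j' i i' (Ne.symm hj'), Int.cast_zero, zero_mul]
    · intro h; exact absurd (Finset.mem_univ _) h
  have hBsum : ∀ (w : ((j : Fin m) × Fin (ℓ j + 1)) → ℚ)
      (hw : ∀ x, w x = (R x.1 x.2 : ℚ) / (a x.1 : ℚ)),
      ∑ x : (j : Fin m) × Fin (ℓ j + 1), ((N none (some x) : ℚ)) * w x = S := by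
    intro w hw
    rw [sumsig, hS]
    refine Finset.sum_congr rfl fun j _ => ?_
    have : ∀ i : Fin (ℓ j + 1), ((N none (some ⟨j, i⟩) : ℚ)) * w ⟨j, i⟩
        = if i = 0 then (R j i : ℚ) / (a j : ℚ) else 0 := by
      intro i
      rw [hN₁, hw]
      split_ifs <;> simp
    rw [Finset.sum_congr rfl fun i _ => this i, Finset.sum_ite_eq' Finset.univ 0]
    simp
  have part1 : S < (s₀ : ℚ) := by
    set v : Option ((j : Fin m) × Fin (ℓ j + 1)) → ℚ :=
      fun o => Option.elim o 1 (fun x => (R x.1 x.2 : ℚ) / (a x.1 : ℚ)) with hv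
    have hv0 : v ≠ 0 := fun h => by simpa [hv] using congrFun h none
    have hNv : (N.map (Int.cast : ℤ → ℚ)).mulVec v
        = fun o => Option.elim o (S - (s₀ : ℚ)) (fun _ => 0) := by
      funext o
      rw [Matrix.mulVec, dotProduct]
      rw [Fintype.sum_option]
      cases o with
      | none =>
        simp only [Matrix.map_apply, hN₀, Option.elim]
        rw [hBsum (fun x => v (some x)) (fun x => rfl)]
        have hv1 : v none = 1 := rfl
        push_cast [hv1]; ring
      | some x =>
        obtain ⟨j, i⟩ := x
        simp only [Matrix.map_apply, hN₂, Option.elim]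
        rw [hNrow (fun x => v (some x)) (fun x => rfl) j i]
        have hv1 : v none = 1 := rfl
        rw [hv1]; split_ifs <;> norm_num
    have h := hNdef v hv0
    rw [hNv, dotProduct, Fintype.sum_option] at h
    simp only [Option.elim, mul_zero, Finset.sum_const_zero, add_zero, one_mul, hv] at h
    linarith
  -- chain determinants
  have hdetM : ∀ j, (M j).det = (-1)^(ℓ j + 1) * a j := fun j =>
    chain_det_aux (M j) (hMadj j) (hMoff j) (a j) (R j) (hRlast j) (hRrel j)
  -- block decomposition
  let A : Matrix Unit Unit ℚ := fun _ _ => -(s₀ : ℚ)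
  let B : Matrix Unit ((j : Fin m) × Fin (ℓ j + 1)) ℚ := fun _ x => ((N none (some x) : ℤ) : ℚ)
  let C : Matrix ((j : Fin m) × Fin (ℓ j + 1)) Unit ℚ := fun x _ => ((N (some x) none : ℤ) : ℚ)
  let D : Matrix ((j : Fin m) × Fin (ℓ j + 1)) ((j : Fin m) × Fin (ℓ j + 1)) ℚ :=
    fun x y => ((N (some x) (some y) : ℤ) : ℚ)
  let e : Option ((j : Fin m) × Fin (ℓ j + 1)) ≃ Unit ⊕ ((j : Fin m) × Fin (ℓ j + 1)) :=
    (Equiv.optionEquivSumPUnit _).trans (Equiv.sumComm _ PUnit)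
  have he1 : e none = Sum.inl () := rfl
  have he2 : ∀ x, e (some x) = Sum.inr x := fun x => rfl
  have hNF : N.map (Int.cast : ℤ → ℚ) = (Matrix.fromBlocks A B C D).submatrix e e := by
    ext x y
    cases x with
    | none => cases y with
      | none => simp [he1, hN₀, A]; rfl
      | some y => simp [he1, he2, B]; rfl
    | some x => cases y with
      | none => simp [he1, he2, C]; rfl
      | some y => simp [he2, D]; rfl
  have hdet1 : (N.map (Int.cast : ℤ → ℚ)).det = (Matrix.fromBlocks A B C D).det := by
    rw [hNF, Matrix.det_submatrix_equiv_self]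
  let X : Matrix ((j : Fin m) × Fin (ℓ j + 1)) Unit ℚ :=
    fun x _ => (R x.1 x.2 : ℚ) / (a x.1 : ℚ)
  have hCD : C + D * X = 0 := by
    ext x u
    obtain ⟨j, i⟩ := x
    rw [Matrix.add_apply, Matrix.mul_apply, Matrix.zero_apply]
    simp only [Matrix.add_apply, Matrix.mul_apply, Matrix.zero_apply, C, D, X]
    rw [hNrow (fun y => (R y.1 y.2 : ℚ) / (a y.1 : ℚ)) (fun _ => rfl) j i, hN₂]
    split_ifs <;> norm_num
  have hmul : Matrix.fromBlocks A B C D * Matrix.fromBlocks 1 0 X 1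
      = Matrix.fromBlocks (A + B * X) B 0 D := by
    rw [Matrix.fromBlocks_multiply]
    rw [Matrix.mul_one, Matrix.mul_one, Matrix.mul_one, Matrix.mul_zero, Matrix.mul_zero,
      Matrix.mul_one, zero_add, hCD, zero_add]
  have hG : (Matrix.fromBlocks (1 : Matrix Unit Unit ℚ) 0 X 1).det = 1 := by
    rw [Matrix.det_fromBlocks_zero₁₂]
    simp
  have hdet2 : (Matrix.fromBlocks A B C D).det = (A + B * X).det * D.det := by
    have h := congrArg Matrix.det hmul
    rw [Matrix.det_mul, hG, mul_one] at h
    rw [h, Matrix.det_fromBlocks_zero₂₁]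
  have hdetA : (A + B * X).det = S - (s₀ : ℚ) := by
    rw [Matrix.det_unique]
    rw [Matrix.add_apply, Matrix.mul_apply]
    simp only [Matrix.add_apply, Matrix.mul_apply, A, B, X]
    rw [hBsum (fun y => (R y.1 y.2 : ℚ) / (a y.1 : ℚ)) (fun _ => rfl)]
    ring
  have hDtri : D.BlockTriangular Sigma.fst := by
    intro x y h
    obtain ⟨j, i⟩ := x; obtain ⟨j', i'⟩ := y
    show ((N (some ⟨j, i⟩) (some ⟨j', i'⟩) : ℤ) : ℚ) = 0
    rw [hN₄ j j' i i' (ne_of_gt h), Int.cast_zero]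
  have hdetD : D.det = ∏ j, ((M j).det : ℚ) := by
    rw [hDtri.det_fintype]
    refine Finset.prod_congr rfl fun k _ => ?_
    let ek : Fin (ℓ k + 1) ≃ {x : (j : Fin m) × Fin (ℓ j + 1) // x.1 = k} :=
      { toFun := fun i => ⟨⟨k, i⟩, rfl⟩
        invFun := fun x => x.2 ▸ x.1.2
        left_inv := fun i => rfl
        right_inv := by rintro ⟨⟨j, i⟩, rfl⟩; rfl }
    have hsub : (D.toSquareBlock Sigma.fst k).submatrix ek ek
        = (M k).map (Int.cast : ℤ → ℚ) := by
      ext i i'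
      simp only [Matrix.submatrix_apply, Matrix.toSquareBlock_def, Matrix.map_apply]
      show ((N (some ⟨k, i⟩) (some ⟨k, i'⟩) : ℤ) : ℚ) = _
      rw [hN₃]
    calc (D.toSquareBlock Sigma.fst k).det
        = ((D.toSquareBlock Sigma.fst k).submatrix ek ek).det :=
          (Matrix.det_submatrix_equiv_self ek _).symm
      _ = ((M k).map (Int.cast : ℤ → ℚ)).det := by rw [hsub]
      _ = ((M k).det : ℚ) := ((Int.castRingHom ℚ).map_det (M k)).symm
  have hcard : Fintype.card (Option ((j : Fin m) × Fin (ℓ j + 1))) = (∑ j, (ℓ j + 1)) + 1 := by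
    simp [Fintype.card_option, Fintype.card_sigma]
  have part2 : (N.map (Int.cast : ℤ → ℚ)).det =
      (-1) ^ (Fintype.card (Option ((j : Fin m) × Fin (ℓ j + 1)))) *
        (∏ j, (a j : ℚ)) * ((s₀ : ℚ) - S) := by
    rw [hdet1, hdet2, hdetA, hdetD]
    have h1 : ∏ j, ((M j).det : ℚ) = (-1) ^ (∑ j, (ℓ j + 1)) * ∏ j, (a j : ℚ) := by
      have e1 : ∀ j : Fin m, ((M j).det : ℚ) = (-1 : ℚ) ^ (ℓ j + 1) * (a j : ℚ) := by
        intro j; rw [hdetM j]; push_cast; ring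
      rw [Finset.prod_congr rfl fun j _ => e1 j, Finset.prod_mul_distrib,
        Finset.prod_pow_eq_pow_sum]
    rw [h1, hcard, pow_succ]
    ring
  refine ⟨part1, part2, ?_⟩
  -- Part 3
  set L : ℤ := Finset.univ.lcm a with hLdef
  have hLdvd : ∀ j, a j ∣ L := fun j => Finset.dvd_lcm (Finset.mem_univ j)
  have haj0 : ∀ j, a j ≠ 0 := fun j => by have := ha j; omega
  have hLne : L ≠ 0 := by
    rw [hLdef]
    intro h
    rw [Finset.lcm_eq_zero_iff] at h
    obtain ⟨j, -, hj⟩ := h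
    exact haj0 j hj
  have hLnn : 0 ≤ L := by
    have h1 : normalize L = L := Finset.normalize_lcm
    have h2 : |L| = L := by rw [Int.abs_eq_normalize, h1]
    rw [← h2]; exact abs_nonneg L
  have hLpos : 0 < L := lt_of_le_of_ne hLnn (Ne.symm hLne)
  have hLQ : (L : ℚ) ≠ 0 := Int.cast_ne_zero.mpr hLne
  have hPL : L ∣ ∏ j, a j :=
    Finset.lcm_dvd fun j _ => Finset.dvd_prod_of_mem a (Finset.mem_univ j)
  have hPpos : 0 < ∏ j, a j := Finset.prod_pos fun j _ => by have := ha j; omega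
  have hD1L : (∏ j, a j) / L * L = ∏ j, a j := Int.ediv_mul_cancel hPL
  have hD1pos : 0 < (∏ j, a j) / L := by
    rcases lt_trichotomy ((∏ j, a j) / L) 0 with h | h | h
    · nlinarith
    · rw [h] at hD1L; simp at hD1L; omega
    · exact h
  have hdiv : ∀ j, ((L / a j : ℤ) : ℚ) = (L : ℚ) / (a j : ℚ) := by
    intro j
    have h1 : L / a j * a j = L := Int.ediv_mul_cancel (hLdvd j)
    have h2 : ((L / a j : ℤ) : ℚ) * (a j : ℚ) = (L : ℚ) := by
      have := congrArg (fun z : ℤ => (z : ℚ)) h1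
      push_cast at this
      exact this
    rw [eq_div_iff (ha0 j)]; exact h2
  have hD2cast : ((L * s₀ - ∑ j, (L / a j) * R j 0 : ℤ) : ℚ)
      = (L : ℚ) * ((s₀ : ℚ) - S) := by
    push_cast
    rw [hS, mul_sub, Finset.mul_sum]
    congr 1
    refine Finset.sum_congr rfl fun j _ => ?_
    rw [hdiv j]; ring
  have hD2pos : 0 < L * s₀ - ∑ j, (L / a j) * R j 0 := by
    have hQ : (0 : ℚ) < (L : ℚ) * ((s₀ : ℚ) - S) :=
      mul_pos (by exact_mod_cast hLpos) (sub_pos.mpr part1)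
    rw [← hD2cast] at hQ
    exact_mod_cast hQ
  have hD1cast : (((∏ j, a j) / L : ℤ) : ℚ) = (∏ j, (a j : ℚ)) / (L : ℚ) := by
    rw [eq_div_iff hLQ]
    have := congrArg (fun z : ℤ => (z : ℚ)) hD1L
    push_cast at this
    exact this
  refine ⟨(∏ j, a j) / L, L * s₀ - ∑ j, (L / a j) * R j 0, hD1pos, hD2pos,
    hD1cast, hD2cast, ?_⟩
  have hPQ : (0 : ℚ) < ∏ j, (a j : ℚ) :=
    Finset.prod_pos fun j _ => by exact_mod_cast (by have := ha j; omega : (0:ℤ) < a j)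
  have hdetNQ : ((N.det : ℤ) : ℚ) =
      (-1) ^ (Fintype.card (Option ((j : Fin m) × Fin (ℓ j + 1)))) *
        (∏ j, (a j : ℚ)) * ((s₀ : ℚ) - S) := by
    rw [← part2]
    exact (Int.castRingHom ℚ).map_det N
  have habs : ((|N.det| : ℤ) : ℚ) = (∏ j, (a j : ℚ)) * ((s₀ : ℚ) - S) := by
    have h1 : |∏ j, (a j : ℚ)| = ∏ j, (a j : ℚ) := abs_of_pos hPQ
    have h2 : |(s₀ : ℚ) - S| = (s₀ : ℚ) - S := abs_of_pos (sub_pos.mpr part1)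
    rw [Int.cast_abs, hdetNQ, abs_mul, abs_mul, abs_pow, abs_neg, abs_one, one_pow,
      one_mul, h1, h2]
  have hprod : (((∏ j, a j) / L * (L * s₀ - ∑ j, (L / a j) * R j 0) : ℤ) : ℚ)
      = (∏ j, (a j : ℚ)) * ((s₀ : ℚ) - S) := by
    rw [Int.cast_mul, hD1cast, hD2cast]
    field_simp
  have := habs.trans hprod.symm
  exact_mod_cast this
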